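/- For every simple acyclic digraph G on vertex set {1,…,n}, there exists a central multigraphical arrangement A such that the associated digraph G_A equals G. -/

import Mathlib

/-- A relation is acyclic if it has no directed cycle. -/
def IsAcyclicRel {α : Type*} (R : α → α → Prop) : Prop :=
  ∀ v, ¬ Relation.TransGen R v v

open Classical in
/-- For every simple acyclic digraph `G` on `{1,…,n}` there is a central multigraphical
arrangement `A` (a finite set of hyperplanes `H_{i,j}^a = {x_i - x_j = a}`, `a > 0`, all
passing through a common point of `V = {∑ x_i = 0}`) whose associated digraph is `G`:
for each pair `(i,j)` the number of hyperplanes of the form `H_{i,j}^a` in `A` is `1` if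
`i → j` is an edge of `G` and `0` otherwise. -/
theorem exists_central_arrangement (n : ℕ) (E : Finset (Fin n × Fin n))
    (hsimple : ∀ e ∈ E, e.1 ≠ e.2)
    (hacyclic : IsAcyclicRel fun a b : Fin n => (a, b) ∈ E) :
    ∃ A : Finset (Fin n × Fin n × ℝ),
      (∀ t ∈ A, 0 < t.2.2) ∧
      (∃ c : Fin n → ℝ, (∑ i, c i = 0) ∧ ∀ t ∈ A, c t.1 - c t.2.1 = t.2.2) ∧
      (∀ i j : Fin n,
        (A.filter fun t => t.1 = i ∧ t.2.1 = j).card = if (i, j) ∈ E then 1 else 0) := by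
  set R : Fin n → Fin n → Prop := fun a b => (a, b) ∈ E with hR
  -- height function
  set h : Fin n → ℕ := fun i =>
    (Finset.univ.filter (fun j => Relation.TransGen R i j)).card with hh
  have hlt : ∀ i j, (i, j) ∈ E → h j < h i := by
    intro i j hij
    apply Finset.card_lt_card
    constructor
    · intro k hk
      simp only [Finset.mem_filter, Finset.mem_univ, true_and] at hk ⊢
      exact Relation.TransGen.head hij hk
    · intro hsub
      have hjj : j ∈ Finset.univ.filter (fun k => Relation.TransGen R i k) := by
        simp only [Finset.mem_filter, Finset.mem_univ, true_and]
        exact Relation.TransGen.single hij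
      have := hsub hjj
      simp only [Finset.mem_filter, Finset.mem_univ, true_and] at this
      exact hacyclic j this
  set S : ℝ := ∑ i, (h i : ℝ) with hS
  set c : Fin n → ℝ := fun i => (h i : ℝ) - S / n with hc
  have hdiff : ∀ i j, c i - c j = (h i : ℝ) - (h j : ℝ) := by
    intro i j; simp only [hc]; ring
  refine ⟨E.image (fun e => (e.1, e.2, c e.1 - c e.2)), ?_, ⟨c, ?_, ?_⟩, ?_⟩
  · intro t ht
    simp only [Finset.mem_image] at ht
    obtain ⟨e, he, rfl⟩ := ht
    have := hlt e.1 e.2 he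
    have : (h e.2 : ℝ) < h e.1 := by exact_mod_cast this
    simp only [hdiff]
    linarith
  · rcases Nat.eq_zero_or_pos n with hn | hn
    · subst hn; simp
    · have hn' : (n : ℝ) ≠ 0 := by positivity
      simp only [hc, Finset.sum_sub_distrib, ← hS, Finset.sum_const, Finset.card_univ,
        Fintype.card_fin, nsmul_eq_mul]
      field_simp
      ring
  · intro t ht
    simp only [Finset.mem_image] at ht
    obtain ⟨e, he, rfl⟩ := ht
    rfl
  · intro i j
    by_cases hij : (i, j) ∈ E
    · rw [if_pos hij]
      have : (E.image (fun e => (e.1, e.2, c e.1 - c e.2))).filter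
          (fun t => t.1 = i ∧ t.2.1 = j) = {(i, j, c i - c j)} := by
        ext t
        simp only [Finset.mem_filter, Finset.mem_image, Finset.mem_singleton]
        constructor
        · rintro ⟨⟨e, he, rfl⟩, h1, h2⟩
          simp only at h1 h2
          subst h1; subst h2; rfl
        · rintro rfl
          exact ⟨⟨(i, j), hij, rfl⟩, rfl, rfl⟩
      rw [this, Finset.card_singleton]
    · rw [if_neg hij]
      rw [Finset.card_eq_zero, Finset.filter_eq_empty_iff]
      rintro t ht ⟨h1, h2⟩
      simp only [Finset.mem_image] at ht
      obtain ⟨e, he, rfl⟩ := ht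
      simp only at h1 h2
      exact hij (by rw [← h1, ← h2]; exact he)
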